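/- For any d ≥ 1, the ratio A_d(√d) = I_{d/2}(√d)/I_{d/2−1}(√d) of modified Bessel functions satisfies 2/3 < √d · A_d(√d) < 1. -/

import Mathlib

open Real

/-- Modified Bessel function of the first kind of order `α`:
`I_α(x) = Σ_{m≥0} (x/2)^(2m+α) / (m! Γ(m+α+1))`. -/
noncomputable def besselI (α x : ℝ) : ℝ :=
  ∑' m : ℕ, (x / 2) ^ (2 * (m : ℝ) + α) / ((m.factorial : ℝ) * Real.Gamma ((m : ℝ) + α + 1))

/-- `A_d(κ) = I_{d/2}(κ) / I_{d/2−1}(κ)`, the norm of the mean of the von Mises–Fisher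
distribution with concentration `κ` on `S^{d−1}`. -/
noncomputable def vmfMeanNorm (d : ℕ) (κ : ℝ) : ℝ :=
  besselI ((d : ℝ) / 2) κ / besselI ((d : ℝ) / 2 - 1) κ

noncomputable def gg (s : ℝ) (m : ℕ) : ℝ :=
  (s / 2) ^ m / (m.factorial * Real.Gamma (m + s))

lemma gg_pos {s : ℝ} (hs : 0 < s) (m : ℕ) : 0 < gg s m := by
  have h1 : (0:ℝ) < m.factorial := by positivity
  have h2 : (0:ℝ) < Real.Gamma (m + s) := Real.Gamma_pos_of_pos (by positivity)
  exact div_pos (pow_pos (by linarith) m) (mul_pos h1 h2)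

lemma gg_succ {s : ℝ} (hs : 0 < s) (m : ℕ) :
    gg s (m + 1) = gg s m * (s / 2 / ((m + 1) * (m + s))) := by
  have hms : (m : ℝ) + s ≠ 0 := by positivity
  have hG : Real.Gamma ((m : ℝ) + 1 + s) = ((m : ℝ) + s) * Real.Gamma (m + s) := by
    rw [show (m : ℝ) + 1 + s = ((m : ℝ) + s) + 1 by ring, Real.Gamma_add_one hms]
  have h1 : (0:ℝ) < m.factorial := by positivity
  have h2 : (0:ℝ) < Real.Gamma ((m:ℝ) + s) := Real.Gamma_pos_of_pos (by positivity)
  have h3 : ((m:ℝ) + 1) ≠ 0 := by positivity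
  simp only [gg, Nat.factorial_succ, Nat.cast_mul, Nat.cast_add, Nat.cast_one, hG, pow_succ]
  field_simp

lemma gg_succ_le {s : ℝ} (hs : 0 < s) (m : ℕ) :
    gg s (m + 1) ≤ gg s m * (1 / (2 * (m + 1))) := by
  rw [gg_succ hs m]
  apply mul_le_mul_of_nonneg_left _ (le_of_lt (gg_pos hs m))
  rw [div_le_div_iff₀ (by positivity) (by positivity)]
  nlinarith [Nat.cast_nonneg (α := ℝ) m]

lemma gg_summable {s : ℝ} (hs : 0 < s) : Summable (gg s) := by
  apply summable_of_ratio_norm_eventually_le (r := 1/2) (by norm_num)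
  filter_upwards with m
  have h1 := gg_succ_le hs m
  have h2 := gg_pos hs m
  have h3 := gg_pos hs (m+1)
  rw [Real.norm_eq_abs, Real.norm_eq_abs, abs_of_pos h3, abs_of_pos h2]
  calc gg s (m+1) ≤ gg s m * (1/(2*(m+1))) := h1
    _ ≤ gg s m * (1/2) := by
        apply mul_le_mul_of_nonneg_left _ h2.le
        rw [div_le_div_iff₀ (by positivity) (by norm_num)]
        nlinarith [Nat.cast_nonneg (α := ℝ) m]
    _ = 1/2 * gg s m := by ring

noncomputable def uu (s : ℝ) (m : ℕ) : ℝ := s / (m + s) * gg s m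

lemma uu_nonneg {s : ℝ} (hs : 0 < s) (m : ℕ) : 0 ≤ uu s m := by
  have h1 := gg_pos hs m
  have h2 : (0:ℝ) < (m:ℝ) + s := by positivity
  have h3 : 0 ≤ s / ((m:ℝ) + s) := by positivity
  exact mul_nonneg h3 h1.le

lemma uu_le_gg {s : ℝ} (hs : 0 < s) (m : ℕ) : uu s m ≤ gg s m := by
  have hg := gg_pos hs m
  have hms : (0:ℝ) < (m:ℝ) + s := by positivity
  have : s / ((m:ℝ) + s) ≤ 1 := by
    rw [div_le_one hms]; linarith [Nat.cast_nonneg (α := ℝ) m]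
  calc uu s m ≤ 1 * gg s m := mul_le_mul_of_nonneg_right this hg.le
    _ = gg s m := one_mul _

lemma uu_summable {s : ℝ} (hs : 0 < s) : Summable (uu s) :=
  Summable.of_nonneg_of_le (uu_nonneg hs) (uu_le_gg hs) (gg_summable hs)

lemma besselI_eq {α x : ℝ} (hx : 0 < x) :
    besselI α x = (x/2) ^ α *
      ∑' m : ℕ, ((x/2)^2) ^ m / ((m.factorial : ℝ) * Real.Gamma ((m : ℝ) + α + 1)) := by
  rw [besselI, ← tsum_mul_left]
  congr 1
  funext m
  have hx2 : (0:ℝ) < x/2 := by linarith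
  have h1 : (x/2) ^ (2 * (m:ℝ) + α) = (x/2) ^ (2*(m:ℝ)) * (x/2) ^ α := Real.rpow_add hx2 _ _
  have h2 : (x/2) ^ (2*(m:ℝ)) = ((x/2)^2)^m := by
    rw [show (2*(m:ℝ)) = ((2*m : ℕ) : ℝ) by push_cast; ring, Real.rpow_natCast, pow_mul]
  rw [h1, h2]
  ring

lemma gg_tail {s : ℝ} (hs : 0 < s) (m : ℕ) : gg s (m + 2) ≤ gg s 2 * (1/6) ^ m := by
  induction m with
  | zero => simp
  | succ n ih =>
      have h1 := gg_succ_le hs (n+2)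
      have hc : (1 / (2 * ((((n:ℕ)+2 : ℕ) : ℝ) + 1)) : ℝ) ≤ 1/6 := by
        rw [div_le_div_iff₀ (by positivity) (by norm_num)]
        push_cast
        nlinarith [Nat.cast_nonneg (α := ℝ) n]
      have h2 : gg s (n+2+1) ≤ gg s (n+2) * (1/6) :=
        le_trans h1 (mul_le_mul_of_nonneg_left hc (gg_pos hs (n+2)).le)
      calc gg s (n+1+2) = gg s (n+2+1) := by norm_num
        _ ≤ gg s (n+2) * (1/6) := h2
        _ ≤ gg s 2 * (1/6)^n * (1/6) := mul_le_mul_of_nonneg_right ih (by norm_num)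
        _ = gg s 2 * (1/6)^(n+1) := by ring

lemma gg_one {s : ℝ} (hs : 0 < s) : gg s 1 = gg s 0 * (1/2) := by
  have h := gg_succ hs 0
  simp only [Nat.cast_zero, zero_add] at h
  rw [h]
  congr 1
  rw [one_mul, div_div, mul_comm, ← div_div, div_self (ne_of_gt hs)]

lemma gg_two {s : ℝ} (hs : 0 < s) : gg s 2 = gg s 0 * (s / (8 * (1 + s))) := by
  have h := gg_succ hs 1
  simp only [Nat.cast_one] at h
  have h1s : (1:ℝ) + s ≠ 0 := by positivity
  have hr : (1/2 : ℝ) * (s / 2 / ((1 + 1) * (1 + s))) = s / (8 * (1 + s)) := by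
    rw [div_mul_div_comm, div_eq_div_iff (by positivity) (by positivity)]
    ring
  rw [h, gg_one hs, mul_assoc, hr]

noncomputable def hh (s : ℝ) (m : ℕ) : ℝ := uu s m - 2/3 * gg s m

lemma hh_zero {s : ℝ} (hs : 0 < s) : hh s 0 = gg s 0 * (1/3) := by
  have hsne : s ≠ 0 := ne_of_gt hs
  simp only [hh, uu, Nat.cast_zero, zero_add, div_self hsne]
  ring

lemma hh_one {s : ℝ} (hs : 0 < s) : hh s 1 = gg s 0 * (s / (1 + s) - 2/3) * (1/2) := by
  simp only [hh, uu, Nat.cast_one, gg_one hs]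
  ring

lemma lower_aux {s : ℝ} (hs : 0 < s) :
    0 < hh s 0 + (hh s 1 + -(4/5 * gg s 2)) := by
  rw [hh_zero hs, hh_one hs, gg_two hs]
  have h1s : (0:ℝ) < 1 + s := by linarith
  have hg0 := gg_pos hs 0
  have heq : gg s 0 * (1/3) + (gg s 0 * (s / (1 + s) - 2/3) * (1/2) +
      -(4/5 * (gg s 0 * (s / (8 * (1 + s)))))) = gg s 0 * (2*s / (5*(1+s))) := by
    field_simp
    ring
  rw [heq]
  positivity

theorem besselI_ratio_bound (d : ℕ) (hd : 1 ≤ d) :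
    2 / 3 < Real.sqrt d * vmfMeanNorm d (Real.sqrt d) ∧
      Real.sqrt d * vmfMeanNorm d (Real.sqrt d) < 1 := by
  have hd1 : (1:ℝ) ≤ (d:ℝ) := by exact_mod_cast hd
  set s : ℝ := (d:ℝ)/2 with hs_def
  have hs : 0 < s := by simp only [hs_def]; linarith
  have hx : 0 < Real.sqrt d := Real.sqrt_pos.mpr (by linarith)
  set x : ℝ := Real.sqrt d with hx_def
  have hxx : x^2 = 2*s := by
    simp only [hx_def, hs_def]; rw [Real.sq_sqrt (by linarith)]; ring
  have hq : (x/2)^2 = s/2 := by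
    rw [div_pow]; rw [hxx]; ring
  set S0 : ℝ := ∑' m, gg s m with hS0_def
  set SU : ℝ := ∑' m, uu s m with hSU_def
  have hS0pos : 0 < S0 :=
    Summable.tsum_pos (gg_summable hs) (fun m => (gg_pos hs m).le) 0 (gg_pos hs 0)
  have hA : besselI ((d:ℝ)/2 - 1) x = (x/2)^((d:ℝ)/2 - 1) * S0 := by
    rw [besselI_eq hx]
    congr 1
    apply tsum_congr
    intro m
    rw [hq, gg, show (m:ℝ) + ((d:ℝ)/2 - 1) + 1 = (m:ℝ) + s by simp only [hs_def]; ring]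
  have hB : besselI ((d:ℝ)/2) x = (x/2)^((d:ℝ)/2) * (SU / s) := by
    rw [besselI_eq hx]
    congr 1
    rw [hSU_def, ← tsum_div_const]
    apply tsum_congr
    intro m
    have hms : (m : ℝ) + s ≠ 0 := by positivity
    have hG : Real.Gamma ((m : ℝ) + (d:ℝ)/2 + 1) = ((m : ℝ) + s) * Real.Gamma (m + s) := by
      rw [show (m : ℝ) + (d:ℝ)/2 + 1 = ((m : ℝ) + s) + 1 from by simp only [hs_def],
        Real.Gamma_add_one hms]
    rw [hq, hG, uu, gg]
    have h1 : (0:ℝ) < m.factorial := by positivity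
    have h2 : (0:ℝ) < Real.Gamma ((m:ℝ) + s) := Real.Gamma_pos_of_pos (by positivity)
    have hsne : s ≠ 0 := ne_of_gt hs
    field_simp
  have hc : (0:ℝ) < (x/2)^((d:ℝ)/2 - 1) := Real.rpow_pos_of_pos (by linarith) _
  have hcne : (x/2)^((d:ℝ)/2 - 1) ≠ 0 := ne_of_gt hc
  have hcs : (x/2)^((d:ℝ)/2) = (x/2)^((d:ℝ)/2 - 1) * (x/2) := by
    have h := Real.rpow_add (show (0:ℝ) < x/2 by linarith) ((d:ℝ)/2 - 1) 1
    rw [Real.rpow_one, show (d:ℝ)/2 - 1 + 1 = (d:ℝ)/2 by ring] at h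
    exact h
  have hsne : s ≠ 0 := ne_of_gt hs
  have hS0ne : S0 ≠ 0 := ne_of_gt hS0pos
  have hkey : x * vmfMeanNorm d x = SU / S0 := by
    rw [vmfMeanNorm, hA, hB, hcs, mul_assoc ((x/2)^((d:ℝ)/2-1)), mul_div_mul_left _ _ hcne]
    field_simp
    linear_combination SU * hxx + 2 * SU * hs_def
  rw [hkey]
  constructor
  · -- lower bound
    rw [lt_div_iff₀ hS0pos]
    have hstep : 0 < SU - 2/3 * S0 := by
      have hhsum : Summable (hh s) := (uu_summable hs).sub ((gg_summable hs).mul_left (2/3))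
      have hhtsum : ∑' m, hh s m = SU - 2/3 * S0 := by
        rw [show (hh s) = fun m => uu s m - 2/3 * gg s m from rfl,
          Summable.tsum_sub (uu_summable hs) ((gg_summable hs).mul_left (2/3)), tsum_mul_left]
      have hsplit : ∑' m, hh s m = hh s 0 + (hh s 1 + ∑' m, hh s (m + 2)) := by
        rw [Summable.tsum_eq_zero_add hhsum]
        congr 1
        have hsum1 : Summable (fun m => hh s (m + 1)) := by
          rwa [summable_nat_add_iff 1]
        rw [Summable.tsum_eq_zero_add hsum1]
      have htail : -(4/5 * gg s 2) ≤ ∑' m, hh s (m + 2) := by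
        have hsum2 : Summable (fun m => hh s (m + 2)) := by
          rwa [summable_nat_add_iff 2]
        have hgeo : Summable (fun m : ℕ => -(2/3 * gg s 2 * (1/6)^m)) := by
          apply Summable.neg
          exact (summable_geometric_of_lt_one (by norm_num) (by norm_num)).mul_left _
        have hterm : ∀ m : ℕ, -(2/3 * gg s 2 * (1/6)^m) ≤ hh s (m + 2) := by
          intro m
          have h1 : gg s (m+2) ≤ gg s 2 * (1/6)^m := gg_tail hs m
          have h2 : 0 ≤ uu s (m+2) := uu_nonneg hs _
          simp only [hh]
          nlinarith
        have hgval : ((1:ℝ) - 1/6)⁻¹ = 6/5 := by norm_num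
        calc -(4/5 * gg s 2) = ∑' m : ℕ, -(2/3 * gg s 2 * (1/6)^m) := by
              rw [tsum_neg, tsum_mul_left,
                tsum_geometric_of_lt_one (by norm_num) (by norm_num), hgval]
              ring
          _ ≤ ∑' m, hh s (m + 2) := Summable.tsum_le_tsum hterm hgeo hsum2
      have hfinal := lower_aux hs
      have hmono := add_le_add_left (add_le_add_left htail (hh s 1)) (hh s 0)
      rw [← hhtsum, hsplit]
      linarith
    linarith
  · -- upper bound
    rw [div_lt_one hS0pos]
    apply Summable.tsum_lt_tsum (i := 1) (fun m => uu_le_gg hs m) _ (uu_summable hs) (gg_summable hs)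
    have hg := gg_pos hs 1
    have h1s : (0:ℝ) < 1 + s := by linarith
    have hlt : s / (((1:ℕ):ℝ) + s) < 1 := by
      rw [Nat.cast_one, div_lt_one h1s]; linarith
    calc uu s 1 = s / (((1:ℕ):ℝ) + s) * gg s 1 := rfl
      _ < 1 * gg s 1 := mul_lt_mul_of_pos_right hlt hg
      _ = gg s 1 := one_mul _
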